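/- Every sequence of length at least 22 over a 3-letter alphabet that avoids repetitions of length at most 6 has three consecutive gaps g_1, g_2, g_3 (between four consecutive peaks) with g_1 ≥ g_2 and g_2 ≤ g_3. -/
import Mathlib


/-- A sequence `s` of length `n` avoids repetitions of length at most 6 if no block of
`2l` consecutive entries with `1 ≤ l ≤ 3` forms a repetition. -/
def AvoidsShortReps (n : ℕ) (s : ℕ → Fin 3) : Prop :=
  ∀ start l : ℕ, 1 ≤ l → l ≤ 3 → start + 2 * l ≤ n →
    ¬ (∀ i, i < l → s (start + i) = s (start + l + i))

/-- A position `p` of a sequence of length `n` is a peak if it is the first or the last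
position, or its two neighboring entries are equal. -/
def IsPeak (n : ℕ) (s : ℕ → Fin 3) (p : ℕ) : Prop :=
  p < n ∧ (p = 0 ∨ p = n - 1 ∨ s (p - 1) = s (p + 1))

/-- `p` and `q` are consecutive peaks (with `p < q` and no peak strictly in between);
the gap between them is `q - p - 1`. -/
def ConsecutivePeaks (n : ℕ) (s : ℕ → Fin 3) (p q : ℕ) : Prop :=
  IsPeak n s p ∧ IsPeak n s q ∧ p < q ∧ ∀ r, p < r → r < q → ¬ IsPeak n s r

lemma fin3_aux : ∀ x y z w : Fin 3, x ≠ y → y ≠ z → x ≠ z → w ≠ y → w ≠ z → w = x := by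
  intro x y z w
  fin_cases x <;> fin_cases y <;> fin_cases z <;> fin_cases w <;> decide

lemma adj_ne {n : ℕ} {s : ℕ → Fin 3} (h : AvoidsShortReps n s) (i : ℕ) (hi : i + 2 ≤ n) :
    s i ≠ s (i + 1) := fun he =>
  h i 1 le_rfl (by norm_num) (by omega) (fun j hj => by interval_cases j; exact he)

lemma rep3_aux {n : ℕ} {s : ℕ → Fin 3} (h : AvoidsShortReps n s) (a : ℕ) (ha : a + 6 ≤ n)
    (e0 : s a = s (a + 3)) (e1 : s (a + 1) = s (a + 4)) (e2 : s (a + 2) = s (a + 5)) :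
    False :=
  h a 3 (by norm_num) le_rfl (by omega) (fun i hi => by
    interval_cases i
    exacts [e0, e1, e2])

lemma nonpeak_aux {n : ℕ} {s : ℕ → Fin 3} {r : ℕ} (hr : r < n) (hnp : ¬ IsPeak n s r) :
    s (r - 1) ≠ s (r + 1) := by
  unfold IsPeak at hnp
  push_neg at hnp
  exact (hnp hr).2.2

lemma next_peak {n : ℕ} {s : ℕ → Fin 3} {p : ℕ} (hp : IsPeak n s p) (hlt : p < n - 1) :
    ∃ q, ConsecutivePeaks n s p q := by
  classical
  have hex : ∃ q, p < q ∧ IsPeak n s q :=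
    ⟨n - 1, hlt, ⟨by omega, Or.inr (Or.inl rfl)⟩⟩
  exact ⟨Nat.find hex, hp, (Nat.find_spec hex).2, (Nat.find_spec hex).1,
    fun r h1 h2 hr => Nat.find_min hex h2 ⟨h1, hr⟩⟩

lemma gap_le {n : ℕ} {s : ℕ → Fin 3} (h : AvoidsShortReps n s) {p q : ℕ}
    (hcp : ConsecutivePeaks n s p q) : q ≤ p + 4 := by
  by_contra hcon
  push_neg at hcon
  have hqn : q < n := hcp.2.1.1
  have hnp : ∀ k, 1 ≤ k → k ≤ 4 → s (p + k - 1) ≠ s (p + k + 1) :=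
    fun k h1 h2 => nonpeak_aux (by omega) (hcp.2.2.2 (p + k) (by omega) (by omega))
  have d02 : s p ≠ s (p+2) := hnp 1 (by norm_num) (by norm_num)
  have d13 : s (p+1) ≠ s (p+3) := hnp 2 (by norm_num) (by norm_num)
  have d24 : s (p+2) ≠ s (p+4) := hnp 3 (by norm_num) (by norm_num)
  have d35 : s (p+3) ≠ s (p+5) := hnp 4 (by norm_num) (by norm_num)
  have e01 : s p ≠ s (p+1) := adj_ne h p (by omega)
  have e12 : s (p+1) ≠ s (p+2) := adj_ne h (p+1) (by omega)
  have e23 : s (p+2) ≠ s (p+3) := adj_ne h (p+2) (by omega)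
  have e34 : s (p+3) ≠ s (p+4) := adj_ne h (p+3) (by omega)
  have e45 : s (p+4) ≠ s (p+5) := adj_ne h (p+4) (by omega)
  have a3 : s (p+3) = s p :=
    fin3_aux (s p) (s (p+1)) (s (p+2)) (s (p+3)) e01 e12 d02 d13.symm e23.symm
  have a4 : s (p+4) = s (p+1) :=
    fin3_aux (s (p+1)) (s (p+2)) (s (p+3)) (s (p+4)) e12 e23 d13 d24.symm e34.symm
  have a5 : s (p+5) = s (p+2) :=
    fin3_aux (s (p+2)) (s (p+3)) (s (p+4)) (s (p+5)) e23 e34 d24 d35.symm e45.symm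
  exact rep3_aux h p (by omega) a3.symm a4.symm a5.symm

lemma tri_mono : ∀ x y : ℕ, x < y → y ≤ 3 →
    x + 1 + x * (x + 1) / 2 ≤ y * (y + 1) / 2 := by
  intro x y h1 h2
  interval_cases y <;> interval_cases x <;> norm_num

lemma desc_bound {n : ℕ} {s : ℕ → Fin 3} (h : AvoidsShortReps n s)
    (hnt : ∀ a b c d, ConsecutivePeaks n s a b → ConsecutivePeaks n s b c →
      ConsecutivePeaks n s c d → c - b - 1 ≤ b - a - 1 → c - b - 1 ≤ d - c - 1 → False) :
    ∀ g, g ≤ 3 → ∀ o p q, ConsecutivePeaks n s o p → ConsecutivePeaks n s p q →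
      q = p + 1 + g → q - p ≤ p - o → n ≤ q + 1 + g * (g + 1) / 2 := by
  intro g
  induction g using Nat.strong_induction_on with
  | _ g IH =>
    intro hg3 o p q hop hpq hq hle
    have hqn : q < n := hpq.2.1.1
    by_cases hq1 : q = n - 1
    · exact le_trans (by omega : n ≤ q + 1) (Nat.le_add_right _ _)
    · obtain ⟨r, hqr⟩ := next_peak hpq.2.1 (by omega)
      have hrq : q < r := hqr.2.2.1
      obtain ⟨g', hg'def⟩ : ∃ g', r = q + 1 + g' := ⟨r - q - 1, by omega⟩
      have hoplt : o < p := hop.2.2.1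
      have hpqlt : p < q := hpq.2.2.1
      have hg'lt : g' < g := by
        by_contra hc
        exact hnt o p q r hop hpq hqr (by omega) (by omega)
      have hkey := IH g' hg'lt (by omega) p q r hpq hqr hg'def (by omega)
      have htri := tri_mono g' g hg'lt hg3
      linarith

lemma asc_bound {n : ℕ} {s : ℕ → Fin 3} (h : AvoidsShortReps n s)
    (hnt : ∀ a b c d, ConsecutivePeaks n s a b → ConsecutivePeaks n s b c →
      ConsecutivePeaks n s c d → c - b - 1 ≤ b - a - 1 → c - b - 1 ≤ d - c - 1 → False) :
    ∀ k p q g, ConsecutivePeaks n s p q → q = p + 1 + g → 3 ≤ g + k →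
      n + g * (g + 3) / 2 ≤ q + 20 := by
  intro k
  induction k with
  | zero =>
    intro p q g hpq hq hk
    have hq4 : q ≤ p + 4 := gap_le h hpq
    have hg : g = 3 := by omega
    subst hg
    have hqn : q < n := hpq.2.1.1
    by_cases hq1 : q = n - 1
    · omega
    · obtain ⟨r, hqr⟩ := next_peak hpq.2.1 (by omega)
      have hrq : q < r := hqr.2.2.1
      obtain ⟨g', hg'def⟩ : ∃ g', r = q + 1 + g' := ⟨r - q - 1, by omega⟩
      have hg'3 : g' ≤ 3 := by have := gap_le h hqr; omega
      have hkey := desc_bound h hnt g' hg'3 p q r hpq hqr hg'def (by omega)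
      interval_cases g' <;> omega
  | succ k IH =>
    intro p q g hpq hq hk
    by_cases hk' : 3 ≤ g + k
    · exact IH p q g hpq hq hk'
    · have hqn : q < n := hpq.2.1.1
      have hgle : g ≤ 2 := by omega
      by_cases hq1 : q = n - 1
      · interval_cases g <;> omega
      · obtain ⟨r, hqr⟩ := next_peak hpq.2.1 (by omega)
        have hrq : q < r := hqr.2.2.1
        obtain ⟨g', hg'def⟩ : ∃ g', r = q + 1 + g' := ⟨r - q - 1, by omega⟩
        have hg'3 : g' ≤ 3 := by have := gap_le h hqr; omega
        by_cases hcase : g' ≤ g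
        · have hkey := desc_bound h hnt g' (by omega) p q r hpq hqr hg'def (by omega)
          interval_cases g <;> interval_cases g' <;> omega
        · have hkey := IH q r g' hqr hg'def (by omega)
          interval_cases g' <;> interval_cases g <;> omega

/-- Every sequence of length at least 22 over 3 letters avoiding repetitions of length
at most 6 has three consecutive gaps `g₁ ≥ g₂ ≤ g₃` between four consecutive peaks. -/
theorem stmt_11 (n : ℕ) (hn : 22 ≤ n) (s : ℕ → Fin 3) (h : AvoidsShortReps n s) :
    ∃ p₀ p₁ p₂ p₃ : ℕ,
      ConsecutivePeaks n s p₀ p₁ ∧ ConsecutivePeaks n s p₁ p₂ ∧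
      ConsecutivePeaks n s p₂ p₃ ∧
      p₂ - p₁ - 1 ≤ p₁ - p₀ - 1 ∧ p₂ - p₁ - 1 ≤ p₃ - p₂ - 1 := by
  by_contra hcon
  have hnt : ∀ a b c d, ConsecutivePeaks n s a b → ConsecutivePeaks n s b c →
      ConsecutivePeaks n s c d → c - b - 1 ≤ b - a - 1 → c - b - 1 ≤ d - c - 1 → False :=
    fun a b c d h1 h2 h3 h4 h5 => hcon ⟨a, b, c, d, h1, h2, h3, h4, h5⟩
  have hp0 : IsPeak n s 0 := ⟨by omega, Or.inl rfl⟩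
  obtain ⟨q, hq⟩ := next_peak hp0 (by omega)
  have hq4 : q ≤ 0 + 4 := gap_le h hq
  have hq0 : 0 < q := hq.2.2.1
  obtain ⟨g, hg⟩ : ∃ g, q = 0 + 1 + g := ⟨q - 1, by omega⟩
  have hkey := asc_bound h hnt 3 0 q g hq hg (by omega)
  have hgle : g ≤ 3 := by omega
  interval_cases g <;> omega
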